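/- Let k ≥ s ≥ 0. The expected number of visits to −1 from above of a uniformly random lattice path with k upsteps and s downsteps equals (1/C(k+s, s)) · Σ_{r=0}^{s−1} C(k+s, r). -/

import Mathlib

/-- The height of a lattice path after `r` steps, where the path is encoded as
`p : Fin n → Bool` (`true` = upstep `+1`, `false` = downstep `-1`) and starts at height `0`. -/
def height {n : ℕ} (p : Fin n → Bool) (r : ℕ) : ℤ :=
  ∑ i ∈ Finset.univ.filter (fun i : Fin n => (i : ℕ) < r), (if p i then (1 : ℤ) else -1)

/-- The number of upsteps of a lattice path. -/
def upSteps {n : ℕ} (p : Fin n → Bool) : ℕ :=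
  (Finset.univ.filter (fun i => p i = true)).card

/-- The number of times the path `p` visits height `m` from above, i.e. the number of
times `r` such that the height after `r` steps is `m` and the `r`-th step is a downstep
(equivalently, the height after `r - 1` steps is `m + 1`). -/
def visitsFromAbove {n : ℕ} (p : Fin n → Bool) (m : ℤ) : ℕ :=
  ((Finset.Icc 1 n).filter (fun r => height p r = m ∧ height p (r - 1) = m + 1)).card

namespace Stmt5
open Finset

def cnt {n : ℕ} (p : Fin n → Bool) (r : ℕ) : ℕ :=
  (Finset.univ.filter (fun i : Fin n => (i : ℕ) < r ∧ p i)).card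

lemma card_filter_lt {n : ℕ} (r : ℕ) (h : r ≤ n) :
    (Finset.univ.filter (fun i : Fin n => (i : ℕ) < r)).card = r := by
  have he : (Finset.univ.filter (fun i : Fin n => (i : ℕ) < r)) =
      (Finset.range r).attachFin (fun m hm => lt_of_lt_of_le (mem_range.mp hm) h) := by
    ext i; simp [Finset.mem_attachFin]
  rw [he, Finset.card_attachFin, Finset.card_range]

lemma height_eq {n : ℕ} (p : Fin n → Bool) (r : ℕ) (h : r ≤ n) :
    height p r = 2 * (cnt p r : ℤ) - r := by
  classical
  set S := Finset.univ.filter (fun i : Fin n => (i : ℕ) < r) with hS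
  have h1 : (S.filter (fun i => p i = true)).card = cnt p r := by
    rw [hS, Finset.filter_filter]; rfl
  have h2 : (S.filter (fun i => p i = true)).card
      + (S.filter (fun i => ¬ p i = true)).card = r := by
    rw [Finset.card_filter_add_card_filter_not, hS, card_filter_lt r h]
  have h3 : height p r = ∑ i ∈ S.filter (fun i => p i = true), (if p i then (1:ℤ) else -1)
      + ∑ i ∈ S.filter (fun i => ¬ p i = true), (if p i then (1:ℤ) else -1) := by
    rw [Finset.sum_filter_add_sum_filter_not]; rfl
  have e1 : ∑ i ∈ S.filter (fun i => p i = true), (if p i then (1:ℤ) else -1)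
      = (S.filter (fun i => p i = true)).card := by
    rw [Finset.sum_congr rfl (fun i hi => ?_), Finset.sum_const, nsmul_eq_mul, mul_one]
    simp [(Finset.mem_filter.mp hi).2]
  have e2 : ∑ i ∈ S.filter (fun i => ¬ p i = true), (if p i then (1:ℤ) else -1)
      = -((S.filter (fun i => ¬ p i = true)).card : ℤ) := by
    rw [Finset.sum_congr rfl (fun i hi => ?_), Finset.sum_const, nsmul_eq_mul, mul_neg_one]
    simp [(Finset.mem_filter.mp hi).2]
  rw [h3, e1, e2, ← h1]
  have hc : (S.filter (fun i => p i = true)).card ≤ r := by omega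

  omega

lemma height_succ {n : ℕ} (p : Fin n → Bool) (r : ℕ) (h : r < n) :
    height p (r+1) = height p r + (if p ⟨r, h⟩ then 1 else -1) := by
  unfold height
  have he : Finset.univ.filter (fun i : Fin n => (i:ℕ) < r + 1) =
      insert ⟨r, h⟩ (Finset.univ.filter (fun i : Fin n => (i:ℕ) < r)) := by
    ext i
    simp only [Finset.mem_filter, Finset.mem_univ, true_and, Finset.mem_insert, Fin.ext_iff]
    omega
  rw [he, Finset.sum_insert (by simp)]
  ring

lemma count_two_blocks {α : Type*} [DecidableEq α] [Fintype α]
    (A B : Finset α) (m : α) (hmA : m ∉ A) (hmB : m ∉ B)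
    (hcover : ∀ i : α, i ∈ A ∨ i = m ∨ i ∈ B) (hAB : Disjoint A B) (a b : ℕ) :
    (Finset.univ.filter (fun q : α → Bool =>
        (A.filter (fun i => q i)).card = a ∧ q m = false ∧ (B.filter (fun i => q i)).card = b)).card
      = A.card.choose a * B.card.choose b := by
  classical
  rw [← Finset.card_powersetCard, ← Finset.card_powersetCard, ← Finset.card_product]
  apply Finset.card_nbij' (fun q => (A.filter (fun i => q i), B.filter (fun i => q i)))
    (fun ST => fun i => decide (i ∈ ST.1 ∨ i ∈ ST.2))
  · intro q hq
    simp only [Finset.mem_coe, Finset.mem_filter, Finset.mem_univ, true_and] at hq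
    simp only [Finset.mem_coe, Finset.mem_product, Finset.mem_powersetCard]
    exact ⟨⟨Finset.filter_subset _ _, hq.1⟩, Finset.filter_subset _ _, hq.2.2⟩
  · intro ST hST
    simp only [Finset.mem_coe, Finset.mem_product, Finset.mem_powersetCard] at hST
    obtain ⟨⟨hS, hSa⟩, hT, hTb⟩ := hST
    simp only [Finset.mem_coe, Finset.mem_filter, Finset.mem_univ, true_and]
    have hS' : A.filter (fun i => decide (i ∈ ST.1 ∨ i ∈ ST.2) = true) = ST.1 := by
      ext i
      simp only [Finset.mem_filter, decide_eq_true_eq]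
      constructor
      · rintro ⟨hiA, hi | hi⟩
        · exact hi
        · exact absurd (hT hi) (fun hB => Finset.disjoint_left.mp hAB hiA hB)
      · intro hi; exact ⟨hS hi, Or.inl hi⟩
    have hT' : B.filter (fun i => decide (i ∈ ST.1 ∨ i ∈ ST.2) = true) = ST.2 := by
      ext i
      simp only [Finset.mem_filter, decide_eq_true_eq]
      constructor
      · rintro ⟨hiB, hi | hi⟩
        · exact absurd (hS hi) (fun hA => Finset.disjoint_left.mp hAB hA hiB)
        · exact hi
      · intro hi; exact ⟨hT hi, Or.inr hi⟩
    refine ⟨by rw [hS', hSa], ?_, by rw [hT', hTb]⟩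
    simp only [decide_eq_false_iff_not, not_or]
    exact ⟨fun h => hmA (hS h), fun h => hmB (hT h)⟩
  · intro q hq
    simp only [Finset.mem_coe, Finset.mem_filter, Finset.mem_univ, true_and] at hq
    funext i
    rcases hcover i with hi | rfl | hi
    · by_cases hqi : q i = true
      · simp [Finset.mem_filter, hi, hqi]
      · simp only [Bool.not_eq_true] at hqi
        simp [Finset.mem_filter, hi, hqi,
          fun hB => Finset.disjoint_left.mp hAB hi hB]
    · simp [hq.2.1, hmA, hmB]
    · by_cases hqi : q i = true
      · simp [Finset.mem_filter, hi, hqi]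
      · simp only [Bool.not_eq_true] at hqi
        simp [Finset.mem_filter, hi, hqi,
          fun hA => Finset.disjoint_left.mp hAB hA hi]
  · intro ST hST
    simp only [Finset.mem_coe, Finset.mem_product, Finset.mem_powersetCard] at hST
    obtain ⟨⟨hS, hSa⟩, hT, hTb⟩ := hST
    have hS' : A.filter (fun i => decide (i ∈ ST.1 ∨ i ∈ ST.2) = true) = ST.1 := by
      ext i
      simp only [Finset.mem_filter, decide_eq_true_eq]
      constructor
      · rintro ⟨hiA, hi | hi⟩
        · exact hi
        · exact absurd (hT hi) (fun hB => Finset.disjoint_left.mp hAB hiA hB)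
      · intro hi; exact ⟨hS hi, Or.inl hi⟩
    have hT' : B.filter (fun i => decide (i ∈ ST.1 ∨ i ∈ ST.2) = true) = ST.2 := by
      ext i
      simp only [Finset.mem_filter, decide_eq_true_eq]
      constructor
      · rintro ⟨hiB, hi | hi⟩
        · exact absurd (hS hi) (fun hA => Finset.disjoint_left.mp hAB hA hiB)
        · exact hi
      · intro hi; exact ⟨hT hi, Or.inr hi⟩
    exact Prod.ext hS' hT'

lemma count_r {n : ℕ} (k j : ℕ) (hj : 2*j+1 ≤ n) (hjk : j < k) :
    (Finset.univ.filter (fun q : Fin n → Bool =>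
       upSteps q = k ∧ height q (2*j+1) = -1 ∧ height q (2*j) = 0)).card
    = (2*j).choose j * (n-1-2*j).choose (k-j) := by
  classical
  set A : Finset (Fin n) := Finset.univ.filter (fun i : Fin n => (i : ℕ) < 2*j) with hA
  set B : Finset (Fin n) := Finset.univ.filter (fun i : Fin n => 2*j < (i : ℕ)) with hB
  set m : Fin n := ⟨2*j, by omega⟩ with hm
  have hmA : m ∉ A := by simp [hA, hm]
  have hmB : m ∉ B := by simp [hB, hm]
  have hcover : ∀ i : Fin n, i ∈ A ∨ i = m ∨ i ∈ B := by
    intro i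
    simp only [hA, hB, hm, Finset.mem_filter, Finset.mem_univ, true_and, Fin.ext_iff]
    omega
  have hAB : Disjoint A B := by
    rw [Finset.disjoint_left]
    intro i hi hi'
    simp only [hA, hB, Finset.mem_filter, Finset.mem_univ, true_and] at hi hi'
    omega
  have hcardA : A.card = 2*j := card_filter_lt (2*j) (by omega)
  have hcardB : B.card = n - 1 - 2*j := by
    have hu : A ∪ insert m B = Finset.univ := by
      ext i
      simp only [Finset.mem_union, Finset.mem_insert, Finset.mem_univ, iff_true]
      exact hcover i
    have hd : Disjoint A (insert m B) := by
      rw [Finset.disjoint_left]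
      intro i hi hi'
      simp only [hA, Finset.mem_filter, Finset.mem_univ, true_and] at hi
      rcases Finset.mem_insert.mp hi' with rfl | hi'
      · simp [hm] at hi
      · simp only [hB, Finset.mem_filter, Finset.mem_univ, true_and] at hi'; omega
    have := Finset.card_union_of_disjoint hd
    rw [hu, Finset.card_univ, Fintype.card_fin,
      Finset.card_insert_of_notMem hmB, hcardA] at this
    omega
  have key : ∀ q : Fin n → Bool,
      (upSteps q = k ∧ height q (2*j+1) = -1 ∧ height q (2*j) = 0)
      ↔ ((A.filter (fun i => q i)).card = j ∧ q m = false ∧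
          (B.filter (fun i => q i)).card = k - j) := by
    intro q
    have hAq : (A.filter (fun i => q i)).card = cnt q (2*j) := by
      rw [hA, Finset.filter_filter]; rfl
    have hup : upSteps q = (A.filter (fun i => q i)).card + (if q m then 1 else 0)
        + (B.filter (fun i => q i)).card := by
      have hu : A ∪ insert m B = Finset.univ := by
        ext i
        simp only [Finset.mem_union, Finset.mem_insert, Finset.mem_univ, iff_true]
        exact hcover i
      have hd : Disjoint A (insert m B) := by
        rw [Finset.disjoint_left]
        intro i hi hi'
        simp only [hA, Finset.mem_filter, Finset.mem_univ, true_and] at hi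
        rcases Finset.mem_insert.mp hi' with rfl | hi'
        · simp [hm] at hi
        · simp only [hB, Finset.mem_filter, Finset.mem_univ, true_and] at hi'; omega
      have h1 : upSteps q = ((A ∪ insert m B).filter (fun i => q i = true)).card := by
        rw [hu]; rfl
      rw [h1, Finset.filter_union,
        Finset.card_union_of_disjoint (Finset.disjoint_filter_filter hd),
        Finset.filter_insert]
      by_cases hqm : q m = true
      · rw [if_pos hqm, Finset.card_insert_of_notMem (fun hc => hmB (Finset.mem_of_mem_filter _ hc)),
          if_pos hqm]
        ring
      · rw [if_neg hqm, if_neg hqm]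
        ring
    have hh0 : height q (2*j) = 2 * (cnt q (2*j) : ℤ) - (2*j) := height_eq q (2*j) (by omega)
    have hh1 : height q (2*j+1) = height q (2*j) + (if q m then 1 else -1) :=
      height_succ q (2*j) (by omega)
    constructor
    · rintro ⟨h1, h2, h3⟩
      have hc : cnt q (2*j) = j := by rw [hh0] at h3; omega
      have hqm : q m = false := by
        rw [hh1, h3] at h2
        by_cases hq : q m = true
        · rw [if_pos hq] at h2; norm_num at h2
        · simpa using hq
      refine ⟨by rw [hAq, hc], hqm, ?_⟩
      rw [hup, hAq, hc, hqm] at h1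
      simp only [Bool.false_eq_true, if_false] at h1
      omega
    · rintro ⟨h1, h2, h3⟩
      have hc : cnt q (2*j) = j := by rw [← hAq, h1]
      have hht : height q (2*j) = 0 := by rw [hh0, hc]; ring
      refine ⟨?_, ?_, hht⟩
      · rw [hup, h1, h2, h3]
        simp only [Bool.false_eq_true, if_false]
        omega
      · rw [hh1, hht, h2]
        simp
  rw [Finset.filter_congr (fun q _ => key q), count_two_blocks A B m hmA hmB hcover hAB j (k-j),
    hcardA, hcardB]

lemma total (k s : ℕ) (hks : s ≤ k) :
    ∑ q ∈ Finset.univ.filter (fun q : Fin (k+s) → Bool => upSteps q = k),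
      visitsFromAbove q (-1)
    = ∑ j ∈ Finset.range s, (2*j).choose j * ((k+s-1-2*j).choose (k-j)) := by
  classical
  set n := k + s with hn
  have step1 : ∑ q ∈ Finset.univ.filter (fun q : Fin n → Bool => upSteps q = k),
      visitsFromAbove q (-1)
    = ∑ r ∈ Finset.Icc 1 n, (Finset.univ.filter (fun q : Fin n → Bool =>
        upSteps q = k ∧ (height q r = -1 ∧ height q (r-1) = -1 + 1))).card := by
    unfold visitsFromAbove
    simp_rw [Finset.card_filter]
    rw [Finset.sum_comm]
    apply Finset.sum_congr rfl
    intro r _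
    rw [Finset.sum_filter]
    apply Finset.sum_congr rfl
    intro q _
    by_cases h1 : upSteps q = k <;> by_cases h2 : height q r = -1 ∧ height q (r-1) = -1+1 <;>
      simp [h1, h2]
  rw [step1]
  have himg : ((Finset.range s).image (fun j => 2*j+1)) ⊆ Finset.Icc 1 n := by
    intro r hr
    simp only [Finset.mem_image, Finset.mem_range] at hr
    obtain ⟨j, hj, rfl⟩ := hr
    simp only [Finset.mem_Icc]
    omega
  rw [← Finset.sum_subset himg ?hzero]
  · rw [Finset.sum_image (by intro a _ b _ h; simp only at h; omega)]
    apply Finset.sum_congr rfl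
    intro j hj
    have hjs := Finset.mem_range.mp hj
    have hpred : ∀ q : Fin n → Bool,
        (upSteps q = k ∧ (height q (2*j+1) = -1 ∧ height q (2*j+1-1) = -1+1)) ↔
        (upSteps q = k ∧ height q (2*j+1) = -1 ∧ height q (2*j) = 0) := by
      intro q
      have : 2*j+1-1 = 2*j := by omega
      rw [this]
      norm_num
    rw [Finset.filter_congr (fun q _ => hpred q), count_r k j (by omega) (by omega)]
  case hzero =>
    intro r hr hnr
    have hr' := Finset.mem_Icc.mp hr
    rcases Nat.even_or_odd r with ⟨t, ht⟩ | ⟨t, ht⟩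
    · -- even r : impossible condition
      rw [Finset.card_eq_zero, Finset.filter_eq_empty_iff]
      intro q _
      rintro ⟨-, -, h2⟩
      rw [height_eq q (r-1) (by omega)] at h2
      have : 2 * (cnt q (r-1) : ℤ) = ((r-1 : ℕ) : ℤ) := by omega
      have : 2 * cnt q (r-1) = r - 1 := by exact_mod_cast this
      omega
    · -- odd r = 2t+1, with t ≥ s
      have hts : s ≤ t := by
        by_contra hc
        apply hnr
        simp only [Finset.mem_image, Finset.mem_range]
        exact ⟨t, by omega, by omega⟩
      have hre : r = 2*t+1 := by omega
      subst hre
      have hpred : ∀ q : Fin n → Bool,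
          (upSteps q = k ∧ (height q (2*t+1) = -1 ∧ height q (2*t+1-1) = -1+1)) ↔
          (upSteps q = k ∧ height q (2*t+1) = -1 ∧ height q (2*t) = 0) := by
        intro q
        have : 2*t+1-1 = 2*t := by omega
        rw [this]
        norm_num
      rw [Finset.filter_congr (fun q _ => hpred q), count_r k t (by omega) (by omega),
        Nat.choose_eq_zero_of_lt (show n-1-2*t < k-t by omega), mul_zero]

def Fsum (k s : ℕ) : ℕ := ∑ j ∈ Finset.range s, (2*j).choose j * ((k+s-1-2*j).choose (k-j))
def Gsum (k s : ℕ) : ℕ := ∑ r ∈ Finset.range s, (k+s).choose r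

lemma R1 (k s : ℕ) (hs : s ≤ k + 1) :
    Fsum (k+1) (s+1) = Fsum k (s+1) + Fsum (k+1) s := by
  unfold Fsum
  rw [Finset.sum_range_succ, Finset.sum_range_succ (fun j => (2*j).choose j * ((k+(s+1)-1-2*j).choose (k-j)))]
  have hlast1 : (2*s).choose s * (((k+1)+(s+1)-1-2*s).choose ((k+1)-s)) = (2*s).choose s := by
    have e : (k+1)+(s+1)-1-2*s = (k+1)-s := by omega
    rw [e, Nat.choose_self, mul_one]
  have hlast2 : (2*s).choose s * ((k+(s+1)-1-2*s).choose (k-s)) = (2*s).choose s := by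
    have e : k+(s+1)-1-2*s = k-s := by omega
    rw [e, Nat.choose_self, mul_one]
  rw [hlast1, hlast2]
  have hsplit : ∀ j ∈ Finset.range s,
      (2*j).choose j * (((k+1)+(s+1)-1-2*j).choose ((k+1)-j))
      = (2*j).choose j * ((k+(s+1)-1-2*j).choose (k-j))
        + (2*j).choose j * (((k+1)+s-1-2*j).choose ((k+1)-j)) := by
    intro j hj
    have hj' := Finset.mem_range.mp hj
    have e1 : (k+1)+(s+1)-1-2*j = (k+s-2*j)+1 := by omega
    have e2 : (k+1)-j = (k-j)+1 := by omega
    have e3 : k+(s+1)-1-2*j = k+s-2*j := by omega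
    have e4 : (k+1)+s-1-2*j = k+s-2*j := by omega
    rw [e1, e2, e3, e4, Nat.choose_succ_succ, mul_add]
  rw [Finset.sum_congr rfl hsplit, Finset.sum_add_distrib]
  ring

lemma R2 (k : ℕ) :
    Fsum k (k+2) = Fsum k (k+1) + Fsum (k+1) k + (2*k+2).choose (k+1) := by
  unfold Fsum
  rw [Finset.sum_range_succ, Finset.sum_range_succ (fun j => (2*j).choose j * ((k+(k+2)-1-2*j).choose (k-j))),
    Finset.sum_range_succ (fun j => (2*j).choose j * ((k+(k+1)-1-2*j).choose (k-j)))]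
  have hl1 : (2*(k+1)).choose (k+1) * ((k+(k+2)-1-2*(k+1)).choose (k-(k+1))) = (2*k+2).choose (k+1) := by
    have e1 : k+(k+2)-1-2*(k+1) = 0 := by omega
    have e2 : k-(k+1) = 0 := by omega
    have e3 : 2*(k+1) = 2*k+2 := by omega
    rw [e1, e2, e3, Nat.choose_self, mul_one]
  have hl2 : (2*k).choose k * ((k+(k+2)-1-2*k).choose (k-k)) = (2*k).choose k := by
    have e1 : k+(k+2)-1-2*k = 1 := by omega
    have e2 : k-k = 0 := by omega
    rw [e1, e2, Nat.choose_zero_right, mul_one]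
  have hl3 : (2*k).choose k * ((k+(k+1)-1-2*k).choose (k-k)) = (2*k).choose k := by
    have e1 : k+(k+1)-1-2*k = 0 := by omega
    have e2 : k-k = 0 := by omega
    rw [e1, e2, Nat.choose_self, mul_one]
  rw [hl1, hl2, hl3]
  have hsplit : ∀ j ∈ Finset.range k,
      (2*j).choose j * ((k+(k+2)-1-2*j).choose (k-j))
      = (2*j).choose j * ((k+(k+1)-1-2*j).choose (k-j))
        + (2*j).choose j * (((k+1)+k-1-2*j).choose ((k+1)-j)) := by
    intro j hj
    have hj' := Finset.mem_range.mp hj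
    have e1 : k+(k+2)-1-2*j = (2*k-2*j)+1 := by omega
    have e2 : (k-j) = (k-1-j)+1 := by omega
    have e3 : k+(k+1)-1-2*j = 2*k-2*j := by omega
    have e4 : (k+1)+k-1-2*j = 2*k-2*j := by omega
    rw [e1, e2, e3, e4, Nat.choose_succ_succ, mul_add, add_comm ((2*j).choose j * _)]
    congr 2
    have h1 : k-1-j ≤ 2*k-2*j := by omega
    have h2 : (2*k-2*j) - (k-1-j) = (k+1)-j := by omega
    rw [← h2, Nat.choose_symm h1]
  rw [Finset.sum_congr rfl hsplit, Finset.sum_add_distrib]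
  ring

lemma RG1 (k s : ℕ) : Gsum (k+1) (s+1) = Gsum k (s+1) + Gsum (k+1) s := by
  unfold Gsum
  rw [Finset.sum_range_succ' (fun r => ((k+1)+(s+1)).choose r),
    Finset.sum_range_succ' (fun r => (k+(s+1)).choose r)]
  have hsplit : ∀ r ∈ Finset.range s,
      ((k+1)+(s+1)).choose (r+1) = (k+(s+1)).choose (r+1) + ((k+1)+s).choose r := by
    intro r _
    have e1 : (k+1)+(s+1) = (k+s+1)+1 := by omega
    have e2 : k+(s+1) = k+s+1 := by omega
    have e3 : (k+1)+s = k+s+1 := by omega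
    rw [e1, e2, e3, Nat.choose_succ_succ]
    simp only [Nat.succ_eq_add_one]
    omega
  rw [Finset.sum_congr rfl hsplit, Finset.sum_add_distrib]
  have : ((k+1)+(s+1)).choose 0 = (k+(s+1)).choose 0 := by simp
  omega

lemma RG2 (k : ℕ) :
    Gsum k (k+2) = Gsum k (k+1) + Gsum (k+1) k + (2*k+2).choose (k+1) := by
  have h1 : Gsum k (k+2) = Gsum (k+1) (k+1) + (2*k+2).choose (k+1) := by
    unfold Gsum
    rw [Finset.sum_range_succ]
    congr 1
    · apply Finset.sum_congr rfl
      intro r _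
      congr 1
      omega
    · congr 1
      omega
  rw [h1, RG1 k k]

lemma ident : ∀ N k s, k + s = N → s ≤ k + 2 → Fsum k s = Gsum k s := by
  intro N
  induction N using Nat.strong_induction_on with
  | _ N ih =>
    intro k s hN hs
    match s, k with
    | 0, k => simp [Fsum, Gsum]
    | s+1, 0 =>
      have hs1 : s ≤ 1 := by omega
      interval_cases s <;> decide
    | s+1, k+1 =>
      by_cases hcorner : s = k + 2
      · subst hcorner
        rw [show k+2+1 = (k+1)+2 by omega, R2 (k+1), RG2 (k+1)]
        rw [ih ((k+1)+(k+2)) (by omega) (k+1) (k+2) rfl (by omega),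
          ih ((k+2)+(k+1)) (by omega) (k+2) (k+1) rfl (by omega)]
      · have hs' : s ≤ k + 1 := by omega
        rw [R1 k s hs', RG1 k s,
          ih (k+(s+1)) (by omega) k (s+1) rfl (by omega),
          ih ((k+1)+s) (by omega) (k+1) s rfl (by omega)]

end Stmt5

/-- For `k ≥ s ≥ 0`, the expected number of visits to `−1` from above of a
uniformly random lattice path with `k` upsteps and `s` downsteps (there are `C(k+s, s)`
such paths) equals `(1/C(k+s, s)) · ∑_{r=0}^{s−1} C(k+s, r)`. -/
theorem stmt_5 (k s : ℕ) (hks : s ≤ k) :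
    (∑ q ∈ Finset.univ.filter (fun q : Fin (k + s) → Bool => upSteps q = k),
        (visitsFromAbove q (-1) : ℚ)) / ((k + s).choose s : ℚ) =
      (1 / ((k + s).choose s : ℚ)) * ∑ r ∈ Finset.range s, ((k + s).choose r : ℚ) := by
  have h1 : (∑ q ∈ Finset.univ.filter (fun q : Fin (k + s) → Bool => upSteps q = k),
      visitsFromAbove q (-1)) = ∑ r ∈ Finset.range s, (k + s).choose r := by
    rw [Stmt5.total k s hks]
    exact Stmt5.ident (k + s) k s rfl (by omega)
  rw [one_div, inv_mul_eq_div]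
  congr 1
  exact_mod_cast h1
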